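/- Let (X, g^L, V, S) be an almost decent spacetime with screen realization S and associated field Z. Then [V,Y] ∈ S for all local sections Y of S if and only if for every leaf L^⊥ of the foliation tangent to V^⊥, the vector field V is a Killing vector field of constant length for the restricted (V,S)-metric g^R|_{L^⊥}. -/

import Mathlib

/-- An abstract calculus of vector fields on a manifold: `C` plays the role of the ring of
smooth functions, `Vf` the `C`-module of vector fields, `g` a (pseudo-)metric, `bracket`
the Lie bracket, `nabla` the Levi-Civita connection and `act` the derivation of functions
along vector fields. -/
structure VFCalc (C : Type*) [CommRing C] (Vf : Type*) [AddCommGroup Vf] [Module C Vf] where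
  g : Vf →ₗ[C] Vf →ₗ[C] C
  bracket : Vf → Vf → Vf
  nabla : Vf → Vf → Vf
  act : Vf → C → C
  g_symm : ∀ A B, g A B = g B A
  compat : ∀ W A B, act W (g A B) = g (nabla W A) B + g A (nabla W B)
  torsion_free : ∀ A B, nabla A B - nabla B A = bracket A B
  nabla_smul_left : ∀ (f : C) (A B : Vf), nabla (f • A) B = f • nabla A B
  nabla_add_left : ∀ A A' B, nabla (A + A') B = nabla A B + nabla A' B
  nabla_add_right : ∀ A B B', nabla A (B + B') = nabla A B + nabla A B'
  nabla_leibniz : ∀ (A : Vf) (f : C) (B : Vf), nabla A (f • B) = act A f • B + f • nabla A B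
  act_add_right : ∀ A f f', act A (f + f') = act A f + act A f'
  act_mul : ∀ A f f', act A (f * f') = f * act A f' + f' * act A f
  act_smul_left : ∀ (f : C) A h, act (f • A) h = f * act A h
  act_add_left : ∀ A A' f, act (A + A') f = act A f + act A' f
  bracket_leibniz : ∀ A (f : C) B, bracket A (f • B) = act A f • B + f • bracket A B

variable {C : Type*} [CommRing C] {Vf : Type*} [AddCommGroup Vf] [Module C Vf]

/-- The Lie derivative `(L_V b)(A,B)` of a (0,2)-tensor `b` along `V`. -/
def VFCalc.lieDeriv (c : VFCalc C Vf) (b : Vf → Vf → C) (V A B : Vf) : C :=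
  c.act V (b A B) - b (c.bracket V A) B - b A (c.bracket V B)

/-- The curvature tensor `R(A,B)W = ∇_A∇_B W - ∇_B∇_A W - ∇_{[A,B]}W`. -/
def VFCalc.curv (c : VFCalc C Vf) (A B W : Vf) : Vf :=
  c.nabla A (c.nabla B W) - c.nabla B (c.nabla A W) - c.nabla (c.bracket A B) W

/-- For an almost decent spacetime with screen realization `S` and associated lightlike
field `Z`, the almost horizontality condition `[V,Y] ∈ S` for all sections `Y` of `S`
holds if and only if, on each leaf of the foliation tangent to `V^⊥`, the vector field
`V` is a Killing field of constant length for the restricted `(V,S)`-metric `g^R`: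
`(L_V g^R)(W₁,W₂) = 0` for all `W₁,W₂ ∈ V^⊥` and `g^R(V,V)` is constant along `V^⊥`. -/
theorem almostHorizontal_iff_isometricFlow (c : VFCalc C Vf) (V Z : Vf)
    (S : Submodule C Vf) (α : Vf →ₗ[C] C) (gR : Vf →ₗ[C] Vf →ₗ[C] C)
    (hrec : ∀ W, c.nabla W V = α W • V)
    (hVV : c.g V V = 0) (hVZ : c.g V Z = 1) (hZZ : c.g Z Z = 0)
    (hVS : ∀ s ∈ S, c.g V s = 0) (hZS : ∀ s ∈ S, c.g Z s = 0)
    (hperp : ∀ W : Vf, c.g V W = 0 → W ∈ Submodule.span C {V} ⊔ S)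
    (hgRsymm : ∀ A B, gR A B = gR B A)
    (hgRVV : gR V V = 1) (hgRZZ : gR Z Z = 1) (hgRVZ : gR V Z = 0)
    (hgRVS : ∀ s ∈ S, gR V s = 0) (hgRZS : ∀ s ∈ S, gR Z s = 0)
    (hgRS : ∀ s ∈ S, ∀ t ∈ S, gR s t = c.g s t) :
    (∀ Y ∈ S, c.bracket V Y ∈ S) ↔
      ((∀ W₁ W₂ : Vf, c.g V W₁ = 0 → c.g V W₂ = 0 →
          c.lieDeriv (fun A B => gR A B) V W₁ W₂ = 0) ∧
       (∀ W : Vf, c.g V W = 0 → c.act W (gR V V) = 0)) := by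
  -- basic derivation facts
  have act0 : ∀ A : Vf, c.act A 0 = 0 := by
    intro A
    have h := c.act_add_right A 0 0
    simpa using h.symm
  have act1 : ∀ A : Vf, c.act A 1 = 0 := by
    intro A
    have h := c.act_mul A 1 1
    simp only [one_mul, mul_one] at h
    exact (right_eq_add.mp h)
  have brk : ∀ A B : Vf, c.bracket A B = c.nabla A B - c.nabla B A :=
    fun A B => (c.torsion_free A B).symm
  have brkVV : c.bracket V V = 0 := by rw [brk]; exact sub_self _
  have brk_add : ∀ A B B' : Vf, c.bracket A (B + B') = c.bracket A B + c.bracket A B' := by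
    intro A B B'
    rw [brk, brk, brk, c.nabla_add_right, c.nabla_add_left]
    abel
  -- [V,W] is orthogonal to V whenever W is
  have gVbr : ∀ W : Vf, c.g V W = 0 → c.g V (c.bracket V W) = 0 := by
    intro W hW
    have h1 : c.g V (c.nabla V W) = 0 := by
      have hc := c.compat V V W
      rw [hW, act0, hrec] at hc
      simp only [map_smul, LinearMap.smul_apply, smul_eq_mul, hW, mul_zero, zero_add] at hc
      exact hc.symm
    have h2 : c.g V (c.nabla W V) = 0 := by
      rw [hrec]
      simp [smul_eq_mul, hVV]
    rw [brk, map_sub, h1, h2, sub_zero]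
  -- decomposition of elements of V^⊥
  have decomp : ∀ W : Vf, c.g V W = 0 → ∃ a : C, ∃ s : Vf, s ∈ S ∧ W = a • V + s := by
    intro W hW
    rcases Submodule.mem_sup.mp (hperp W hW) with ⟨y, hy, z, hz, hyz⟩
    rcases Submodule.mem_span_singleton.mp hy with ⟨a, rfl⟩
    exact ⟨a, z, hz, hyz.symm⟩
  have gZV : c.g Z V = 1 := by rw [c.g_symm]; exact hVZ
  have memS : ∀ W : Vf, c.g V W = 0 → c.g Z W = 0 → W ∈ S := by
    intro W h1 h2
    rcases decomp W h1 with ⟨a, s, hs, rfl⟩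
    have ha : a = 0 := by
      have : c.g Z (a • V + s) = a := by
        simp [map_add, map_smul, smul_eq_mul, gZV, hZS s hs]
      rw [h2] at this
      exact this.symm
    rw [ha, zero_smul, zero_add]
    exact hs
  have gRV_eq : ∀ W : Vf, c.g V W = 0 → gR V W = c.g Z W := by
    intro W hW
    rcases decomp W hW with ⟨a, s, hs, rfl⟩
    simp [map_add, map_smul, smul_eq_mul, hgRVV, hgRVS s hs, gZV, hZS s hs]
  have gRWt : ∀ W : Vf, c.g V W = 0 → ∀ t ∈ S, gR W t = c.g W t := by
    intro W hW t ht
    rcases decomp W hW with ⟨a, u, hu, rfl⟩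
    simp [map_add, LinearMap.add_apply, map_smul, LinearMap.smul_apply, smul_eq_mul,
      hgRVS t ht, hgRS u hu t ht, hVS t ht]
  -- abbreviation for the Lie derivative
  set L : Vf → Vf → C := fun A B => c.lieDeriv (fun A B => gR A B) V A B with hL
  have Lsymm : ∀ A B, L A B = L B A := by
    intro A B
    simp only [hL, VFCalc.lieDeriv]
    rw [hgRsymm A B, hgRsymm (c.bracket V A) B, hgRsymm A (c.bracket V B)]
    ring
  have L_add2 : ∀ A B B', L A (B + B') = L A B + L A B' := by
    intro A B B'
    simp only [hL, VFCalc.lieDeriv, brk_add, map_add, LinearMap.add_apply, c.act_add_right]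
    ring
  have L_smul2 : ∀ (A : Vf) (f : C) (B : Vf), L A (f • B) = f * L A B := by
    intro A f B
    simp only [hL, VFCalc.lieDeriv, c.bracket_leibniz, map_add, map_smul,
      LinearMap.add_apply, LinearMap.smul_apply, smul_eq_mul, c.act_mul]
    ring
  have L_VV : L V V = 0 := by
    simp [hL, VFCalc.lieDeriv, hgRVV, act1, brkVV]
  have L_Vs : ∀ s ∈ S, L V s = - c.g Z (c.bracket V s) := by
    intro s hs
    simp only [hL, VFCalc.lieDeriv, brkVV, hgRVS s hs, act0,
      map_zero, LinearMap.zero_apply, sub_zero, zero_sub]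
    rw [gRV_eq _ (gVbr s (hVS s hs))]
  have L_st : ∀ s ∈ S, ∀ t ∈ S, L s t = 0 := by
    intro s hs t ht
    have h1 : gR (c.bracket V s) t = c.g (c.bracket V s) t :=
      gRWt _ (gVbr s (hVS s hs)) t ht
    have h2 : gR s (c.bracket V t) = c.g s (c.bracket V t) := by
      rw [hgRsymm, c.g_symm]
      exact gRWt _ (gVbr t (hVS t ht)) s hs
    simp only [hL, VFCalc.lieDeriv]
    rw [hgRS s hs t ht, h1, h2, c.compat V s t]
    simp only [brk, map_sub, LinearMap.sub_apply, hrec, map_smul,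
      LinearMap.smul_apply, smul_eq_mul, hVS t ht, mul_zero, c.g_symm s V, hVS s hs]
    ring
  constructor
  · intro hAH
    constructor
    · intro W₁ W₂ h1 h2
      rcases decomp W₁ h1 with ⟨a, s, hs, rfl⟩
      rcases decomp W₂ h2 with ⟨b, t, ht, rfl⟩
      have hLVs : L V s = 0 := by
        rw [L_Vs s hs, hZS _ (hAH s hs), neg_zero]
      have hLVt : L V t = 0 := by
        rw [L_Vs t ht, hZS _ (hAH t ht), neg_zero]
      show L (a • V + s) (b • V + t) = 0
      rw [L_add2, L_smul2, Lsymm _ V, Lsymm _ t,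
        L_add2, L_smul2, L_add2, L_smul2,
        L_VV, hLVs, Lsymm t V, hLVt, L_st t ht s hs]
      ring
    · intro W _
      rw [hgRVV]
      exact act1 W
  · rintro ⟨hKill, -⟩
    intro Y hY
    have hVY : c.g V Y = 0 := hVS Y hY
    have h0 : L V Y = 0 := hKill V Y hVV hVY
    rw [L_Vs Y hY] at h0
    have hZbr : c.g Z (c.bracket V Y) = 0 := by
      have := neg_eq_zero.mp h0
      exact this
    exact memS _ (gVbr Y hVY) hZbr
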